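/- Let p > r and k := ((μ − p − σ²/2) + √((μ − p − σ²/2)² + 2σ²λ))/σ², and assume (μ−r)/(σ²(k+1)) ≥ 1. Let w₀ > 0 and define g(w) := (w/w₀)^{−k} for w > 0. Then for every w > 0 and every γ ∈ [0, w], one has [rw + (μ−r)γ − pw]·g′(w) + (1/2)σ²γ²·g″(w) − λ·g(w) ≥ 0, with equality if and only if γ = w. -/

import Mathlib

lemma stmt_9_hda (w0 e x : ℝ) (hx : x ≠ 0) (hw0 : w0 ≠ 0) :
    HasDerivAt (fun y : ℝ => (y / w0) ^ e) (e * (x / w0) ^ (e - 1) / w0) x := by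
  have h1 : HasDerivAt (fun y : ℝ => y / w0) (1 / w0) x := (hasDerivAt_id x).div_const w0
  have h2 : HasDerivAt (fun z : ℝ => z ^ e) (e * (x / w0) ^ (e - 1)) (x / w0) :=
    Real.hasDerivAt_rpow_const (Or.inl (div_ne_zero hx hw0))
  have := h2.comp x h1
  simpa [div_eq_mul_inv, mul_assoc, Function.comp_def] using this

lemma stmt_9_alg (r mu sigma p k w0 w γ T : ℝ) (hw : w ≠ 0) (hw0 : w0 ≠ 0) :
    (r*w + (mu-r)*γ - p*w) * (-k * (T * (w0/w)) / w0)
    + (1/2)*sigma^2*γ^2 * ((-k) * ((-k-1) * (T*(w0/w)*(w0/w)) / w0) / w0)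
    - (sigma^2/2*k^2 - (mu-p-sigma^2/2)*k) * T
    = (k*T/w^2) * ((w-γ)*((mu-r)*w - sigma^2/2*(k+1)*(γ+w))) := by
  field_simp
  ring

set_option maxHeartbeats 1000000 in
theorem stmt_9 (r mu sigma lam p k w0 : ℝ)
    (hr : 0 < r) (hmu : r < mu) (hs : 0 < sigma) (hlam : 0 < lam) (hp : r < p)
    (hk : k = ((mu - p - sigma^2/2) + Real.sqrt ((mu - p - sigma^2/2)^2 + 2*sigma^2*lam))
            / sigma^2)
    (hcase : 1 ≤ (mu - r) / (sigma^2 * (k + 1)))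
    (hw0 : 0 < w0)
    (g : ℝ → ℝ) (hg : ∀ w, g w = (w / w0) ^ (-k)) :
    ∀ w : ℝ, 0 < w → ∀ γ ∈ Set.Icc 0 w,
      0 ≤ (r * w + (mu - r) * γ - p * w) * deriv g w
            + (1/2) * sigma^2 * γ^2 * deriv (deriv g) w - lam * g w ∧
      ((r * w + (mu - r) * γ - p * w) * deriv g w
            + (1/2) * sigma^2 * γ^2 * deriv (deriv g) w - lam * g w = 0
        ↔ γ = w) := by
  -- basic facts about k
  set A := mu - p - sigma^2/2 with hA
  set S := Real.sqrt (A^2 + 2*sigma^2*lam) with hS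
  have hs2 : (0:ℝ) < sigma^2 := by positivity
  have hS2 : S^2 = A^2 + 2*sigma^2*lam := Real.sq_sqrt (by positivity)
  have hkS : sigma^2 * k = A + S := by rw [hk]; field_simp
  have hSA : |A| < S := by
    rw [hS]
    nth_rewrite 1 [← Real.sqrt_sq_eq_abs]
    exact Real.sqrt_lt_sqrt (sq_nonneg A) (by nlinarith)
  have hkpos : 0 < k := by
    have h0 : 0 < A + S := by
      rcases abs_cases A with ⟨h1, _⟩ | ⟨h1, _⟩ <;> linarith
    rw [hk]; exact div_pos h0 hs2
  have hlam_id : lam = sigma^2/2 * k^2 - A * k := by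
    have h3 : (sigma^2*k - A)^2 = A^2 + 2*sigma^2*lam := by rw [← hS2, hkS]; ring
    have h4 : sigma^2 * lam = sigma^2 * (sigma^2/2*k^2 - A*k) := by
      linear_combination (-1/2) * h3
    exact mul_left_cancel₀ hs2.ne' h4
  have hk1 : (0:ℝ) < sigma^2 * (k + 1) := by positivity
  have hmr : sigma^2 * (k + 1) ≤ mu - r := by
    rwa [le_div_iff₀ hk1, one_mul] at hcase
  -- derivatives of g
  have hgf : g = fun y => (y / w0) ^ (-k) := funext hg
  have hd1 : ∀ x : ℝ, x ≠ 0 → deriv g x = -k * (x / w0) ^ (-k - 1) / w0 := by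
    intro x hx
    rw [hgf]
    exact (stmt_9_hda w0 (-k) x hx hw0.ne').deriv
  intro w hw γ hγ
  obtain ⟨hγ0, hγw⟩ := hγ
  have hev : deriv g =ᶠ[nhds w] fun x => -k * (x / w0) ^ (-k - 1) / w0 := by
    filter_upwards [eventually_ne_nhds hw.ne'] with x hx using hd1 x hx
  have hd2 : deriv (deriv g) w = (-k) * ((-k - 1) * (w / w0) ^ (-k - 2) / w0) / w0 := by
    rw [hev.deriv_eq]
    have := ((stmt_9_hda w0 (-k - 1) w hw.ne' hw0.ne').const_mul (-k)).div_const w0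
    have h := this.deriv
    rw [show (-k - 1 - 1 : ℝ) = -k - 2 by ring] at h
    rw [h]
  have hu : (0:ℝ) < w / w0 := div_pos hw hw0
  have hT : (0:ℝ) < (w / w0) ^ (-k) := Real.rpow_pos_of_pos hu _
  have h1 : (w / w0) ^ (-k - 1) = (w / w0) ^ (-k) * (w0 / w) := by
    rw [show (-k - 1 : ℝ) = -k + (-1) by ring, Real.rpow_add hu, Real.rpow_neg_one, inv_div]
  have h2 : (w / w0) ^ (-k - 2) = (w / w0) ^ (-k) * (w0 / w) * (w0 / w) := by
    rw [show (-k - 2 : ℝ) = (-k + (-1)) + (-1) by ring, Real.rpow_add hu,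
      Real.rpow_add hu, Real.rpow_neg_one, inv_div]
  -- key algebraic identity
  set T := (w / w0) ^ (-k) with hTdef
  have key : (r * w + (mu - r) * γ - p * w) * deriv g w
        + (1/2) * sigma^2 * γ^2 * deriv (deriv g) w - lam * g w
      = (k * T / w^2) * ((w - γ) * ((mu - r) * w - sigma^2/2 * (k+1) * (γ + w))) := by
    rw [hd1 w hw.ne', hd2, hg w, h1, h2, hlam_id, hA]
    linear_combination stmt_9_alg r mu sigma p k w0 w γ ((w/w0)^(-k)) hw.ne' hw0.ne' 
  have hC : 0 < k * T / w^2 := by positivity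
  have hDlb : sigma^2/2 * (k+1) * (w - γ) ≤ (mu - r) * w - sigma^2/2 * (k+1) * (γ + w) := by
    nlinarith [hmr, hw, hγw]
  have hDnn : 0 ≤ (mu - r) * w - sigma^2/2 * (k+1) * (γ + w) := by
    nlinarith [hDlb, hk1, hγw]
  constructor
  · rw [key]
    exact mul_nonneg hC.le (mul_nonneg (by linarith) hDnn)
  · rw [key]
    constructor
    · intro h0
      by_contra hne
      have hlt : γ < w := lt_of_le_of_ne hγw hne
      have hDpos : 0 < (mu - r) * w - sigma^2/2 * (k+1) * (γ + w) := by
        nlinarith [hDlb, hk1, hlt]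
      have : 0 < (k * T / w^2) * ((w - γ) * ((mu - r) * w - sigma^2/2 * (k+1) * (γ + w))) :=
        mul_pos hC (mul_pos (by linarith) hDpos)
      linarith
    · intro h; rw [h]; ring
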